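/- arXiv:1805.01154 — 2 statements merged into one kernel-verified Lean document; each statement's English description precedes it below -/
import Mathlib

section
/- Let N ≥ 1 and let A : ℝ^N → ℝ^N be given by A(ξ) = A₀(|ξ|)ξ for ξ ≠ 0 and A(0) = 0, where A₀ : (0,∞) → (0,∞) is continuous with lim_{t→0⁺} t·A₀(t) = 0 (so A is continuous on ℝ^N). Assume A is continuously differentiable on ℝ^N \ {0} and that there is a function ϑ : (0,∞) → (0,∞) such that the derivative satisfies (D_ξA(ξ) y) · y ≥ (ϑ(|ξ|)/|ξ|)·|y|² for all ξ ∈ ℝ^N \ {0} and all y ∈ ℝ^N. Then A is strictly monotone: (A(ξ) − A(η)) · (ξ − η) > 0 for all ξ, η ∈ ℝ^N with ξ ≠ η. -/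
open Filter Set RealInnerProductSpace

/-- A radial vector field `A(ξ) = A₀(|ξ|)ξ`, continuous on `ℝ^N`, `C¹` away from the
origin, whose derivative satisfies the ellipticity condition
`(D_ξA(ξ)y)·y ≥ (ϑ(|ξ|)/|ξ|)|y|²`, is strictly monotone. -/
theorem stmt_1 (N : ℕ) (hN : 1 ≤ N)
    (A : EuclideanSpace ℝ (Fin N) → EuclideanSpace ℝ (Fin N))
    (A₀ : ℝ → ℝ) (hA₀pos : ∀ t > (0:ℝ), 0 < A₀ t)
    (hA₀cont : ContinuousOn A₀ (Ioi 0))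
    (hA₀lim : Tendsto (fun t => t * A₀ t) (nhdsWithin 0 (Ioi 0)) (nhds 0))
    (hAdef : ∀ ξ : EuclideanSpace ℝ (Fin N), ξ ≠ 0 → A ξ = A₀ ‖ξ‖ • ξ)
    (hA0 : A 0 = 0) (hAcont : Continuous A)
    (A' : EuclideanSpace ℝ (Fin N) → (EuclideanSpace ℝ (Fin N) →L[ℝ] EuclideanSpace ℝ (Fin N)))
    (hA' : ∀ ξ : EuclideanSpace ℝ (Fin N), ξ ≠ 0 → HasFDerivAt A (A' ξ) ξ)
    (hA'cont : ContinuousOn A' {(0 : EuclideanSpace ℝ (Fin N))}ᶜ)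
    (ϑ : ℝ → ℝ) (hϑpos : ∀ t > (0:ℝ), 0 < ϑ t)
    (hell : ∀ ξ : EuclideanSpace ℝ (Fin N), ξ ≠ 0 →
      ∀ y : EuclideanSpace ℝ (Fin N), (ϑ ‖ξ‖ / ‖ξ‖) * ‖y‖ ^ 2 ≤ ⟪A' ξ y, y⟫) :
    ∀ ξ η : EuclideanSpace ℝ (Fin N), ξ ≠ η → 0 < ⟪A ξ - A η, ξ - η⟫ := by
  intro ξ η hne
  by_cases hη : η = 0
  · subst hη
    have hξ : ξ ≠ 0 := hne
    have hnξ : (0:ℝ) < ‖ξ‖ := norm_pos_iff.mpr hξ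
    rw [hA0, hAdef ξ hξ, sub_zero, sub_zero, real_inner_smul_left,
      real_inner_self_eq_norm_sq]
    have := hA₀pos ‖ξ‖ hnξ
    positivity
  by_cases hξ : ξ = 0
  · subst hξ
    have hnη : (0:ℝ) < ‖η‖ := norm_pos_iff.mpr hη
    rw [hA0, hAdef η hη, zero_sub, zero_sub, inner_neg_neg, real_inner_smul_left,
      real_inner_self_eq_norm_sq]
    have := hA₀pos ‖η‖ hnη
    positivity
  -- both nonzero
  set v := ξ - η with hv
  have hvne : v ≠ 0 := sub_ne_zero.mpr hne
  by_cases hseg : ∃ t ∈ Icc (0:ℝ) 1, η + t • v = 0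
  · -- collinear through origin
    obtain ⟨t, ht, heq⟩ := hseg
    have ht0 : t ≠ 0 := by
      rintro rfl; simp at heq; exact hη heq
    have ht1 : t ≠ 1 := by
      rintro rfl; simp [hv] at heq; exact hξ heq
    have ht0' : 0 < t := lt_of_le_of_ne ht.1 (Ne.symm ht0)
    have ht1' : t < 1 := lt_of_le_of_ne ht.2 ht1
    set a : ℝ := (t - 1) / t with ha
    have haneg : a < 0 := div_neg_of_neg_of_pos (by linarith) ht0'
    have hxa : ξ = a • η := by
      have h1 : t • ξ = (t - 1) • η := by
        have h : η + (t • ξ - t • η) = 0 := by rw [← smul_sub, ← hv]; exact heq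
        linear_combination (norm := module) h
      rw [ha, div_eq_inv_mul, ← smul_smul, ← h1, smul_smul,
        inv_mul_cancel₀ ht0, one_smul]
    have hnη : (0:ℝ) < ‖η‖ := norm_pos_iff.mpr hη
    have hnξ : (0:ℝ) < ‖ξ‖ := norm_pos_iff.mpr hξ
    have hAξ := hA₀pos ‖ξ‖ hnξ
    have hAη := hA₀pos ‖η‖ hnη
    rw [hAdef ξ hξ, hAdef η hη]
    set b := A₀ ‖ξ‖ with hb
    set c := A₀ ‖η‖ with hc
    rw [hv, hxa]
    rw [show (b • a • η - c • η : EuclideanSpace ℝ (Fin N))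
        = (b * a - c) • η by module,
      show (a • η - η : EuclideanSpace ℝ (Fin N)) = (a - 1) • η by module,
      real_inner_smul_left, real_inner_smul_right, real_inner_self_eq_norm_sq]
    have hsq : (0:ℝ) < ‖η‖ ^ 2 := pow_pos hnη 2
    have h1 : b * a - c < 0 := by nlinarith
    have h2 : (a - 1) * ‖η‖ ^ 2 < 0 := mul_neg_of_neg_of_pos (by linarith) hsq
    exact mul_pos_of_neg_of_neg h1 h2
  · -- segment avoids the origin: mean value argument
    push_neg at hseg
    set γ : ℝ → EuclideanSpace ℝ (Fin N) := fun t => η + t • v with hγ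
    set g : ℝ → ℝ := fun t => ⟪A (γ t), v⟫ with hg
    have hγcont : Continuous γ := by
      apply continuous_const.add
      exact continuous_id.smul continuous_const
    have hgcont : Continuous g := (hAcont.comp hγcont).inner continuous_const
    have hγd : ∀ t : ℝ, HasDerivAt γ v t := by
      intro t
      have h := ((hasDerivAt_id t).smul_const v).const_add η
      rw [one_smul] at h
      exact h
    have hderiv : ∀ t ∈ Icc (0:ℝ) 1, HasDerivAt g (⟪A' (γ t) v, v⟫) t := by
      intro t ht
      have hz : γ t ≠ 0 := hseg t ht
      have h1 : HasDerivAt (fun s => A (γ s)) (A' (γ t) v) t :=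
        (hA' (γ t) hz).comp_hasDerivAt t (hγd t)
      have h2 := h1.inner ℝ (hasDerivAt_const t v)
      simpa using h2
    have hpos : ∀ t ∈ Icc (0:ℝ) 1, 0 < ⟪A' (γ t) v, v⟫ := by
      intro t ht
      have hz : γ t ≠ 0 := hseg t ht
      have hnz : (0:ℝ) < ‖γ t‖ := norm_pos_iff.mpr hz
      have hnv : (0:ℝ) < ‖v‖ := norm_pos_iff.mpr hvne
      have h := hell (γ t) hz v
      have : 0 < ϑ ‖γ t‖ / ‖γ t‖ * ‖v‖ ^ 2 := by
        have := hϑpos ‖γ t‖ hnz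
        positivity
      linarith
    have hmono : StrictMonoOn g (Icc (0:ℝ) 1) := by
      apply strictMonoOn_of_deriv_pos (convex_Icc 0 1) hgcont.continuousOn
      intro t ht
      rw [interior_Icc] at ht
      have ht' : t ∈ Icc (0:ℝ) 1 := Ioo_subset_Icc_self ht
      rw [(hderiv t ht').deriv]
      exact hpos t ht'
    have h01 : g 0 < g 1 :=
      hmono (left_mem_Icc.mpr zero_le_one) (right_mem_Icc.mpr zero_le_one) zero_lt_one
    have hg0 : g 0 = ⟪A η, v⟫ := by simp [hg, hγ]
    have hg1 : g 1 = ⟪A ξ, v⟫ := by simp [hg, hγ, hv]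
    rw [inner_sub_left]
    rw [hg0, hg1] at h01
    linarith
end

section
/- Let Ω ⊂ ℝ^N (N > 1) be a bounded domain, let 1 ≤ p < p* be real numbers, let u : Ω → [0,∞) be measurable with ∫_Ω u^{p*} dx < ∞, let h > 0, κ ≥ 0, and set u_h = min{u, h}. Then for every L > 0: ∫_Ω u^{p*} u_h^{κp} dx ≤ L·∫_Ω (u·u_h^κ)^p dx + (∫_{{x ∈ Ω : u(x)^{p*−p} > L}} u^{p*} dx)^{(p*−p)/p*} · (∫_Ω (u·u_h^κ)^{p*} dx)^{p/p*}. -/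
open MeasureTheory Filter Set

/-- The splitting/Hölder estimate
`∫_Ω u^{p*} u_h^{κp} ≤ L ∫_Ω (u u_h^κ)^p + (∫_{{u^{p*-p}>L}} u^{p*})^{(p*-p)/p*} (∫_Ω (u u_h^κ)^{p*})^{p/p*}`
for the truncation `u_h = min{u, h}`, with all quantities allowed to be `+∞`. -/
theorem stmt_8 (N : ℕ) (hN : 1 < N) (Ω : Set (EuclideanSpace ℝ (Fin N)))
    (hΩopen : IsOpen Ω) (hΩconn : IsConnected Ω) (hΩbdd : Bornology.IsBounded Ω)
    (p ps : ℝ) (hp : 1 ≤ p) (hpps : p < ps)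
    (u : EuclideanSpace ℝ (Fin N) → ℝ) (hmeas : Measurable u) (hu0 : ∀ x, 0 ≤ u x)
    (hfin : (∫⁻ x in Ω, ENNReal.ofReal (u x ^ ps)) < ⊤)
    (h : ℝ) (hh : 0 < h) (κ : ℝ) (hκ : 0 ≤ κ) (L : ℝ) (hL : 0 < L) :
    (∫⁻ x in Ω, ENNReal.ofReal (u x ^ ps * (min (u x) h) ^ (κ * p))) ≤
      ENNReal.ofReal L * (∫⁻ x in Ω, ENNReal.ofReal ((u x * (min (u x) h) ^ κ) ^ p)) +
        (∫⁻ x in {x | x ∈ Ω ∧ L < u x ^ (ps - p)}, ENNReal.ofReal (u x ^ ps)) ^ ((ps - p) / ps) *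
          (∫⁻ x in Ω, ENNReal.ofReal ((u x * (min (u x) h) ^ κ) ^ ps)) ^ (p / ps) := by
  have hp0 : (0:ℝ) < p := lt_of_lt_of_le zero_lt_one hp
  have hps0 : (0:ℝ) < ps := lt_trans hp0 hpps
  have hpsp : (0:ℝ) < ps - p := sub_pos.mpr hpps
  set A : Set (EuclideanSpace ℝ (Fin N)) := {x | u x ^ (ps - p) ≤ L} with hA
  set S : Set (EuclideanSpace ℝ (Fin N)) := {x | x ∈ Ω ∧ L < u x ^ (ps - p)} with hS
  have hAmeas : MeasurableSet A := measurableSet_le (hmeas.pow_const _) measurable_const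
  have hmin : Measurable fun x => min (u x) h := hmeas.min measurable_const
  have hmin0 : ∀ x, 0 ≤ min (u x) h := fun x => le_min (hu0 x) hh.le
  -- the key pointwise identity `u^{ps} u_h^{κp} = u^{ps-p} (u u_h^κ)^p` for `0 < u x`
  have key : ∀ x : EuclideanSpace ℝ (Fin N), 0 < u x →
      u x ^ ps * (min (u x) h) ^ (κ * p)
        = u x ^ (ps - p) * (u x * (min (u x) h) ^ κ) ^ p := by
    intro x h0
    rw [Real.mul_rpow (hu0 x) (Real.rpow_nonneg (hmin0 x) κ),
      ← Real.rpow_mul (hmin0 x), ← mul_assoc, ← Real.rpow_add h0, sub_add_cancel]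
  -- split the domain
  have hsplit : (∫⁻ x in Ω, ENNReal.ofReal (u x ^ ps * (min (u x) h) ^ (κ * p))) =
      (∫⁻ x in Ω ∩ A, ENNReal.ofReal (u x ^ ps * (min (u x) h) ^ (κ * p))) +
      (∫⁻ x in S, ENNReal.ofReal (u x ^ ps * (min (u x) h) ^ (κ * p))) := by
    have hdiff : Ω \ A = S := by
      ext x; simp only [hA, hS, mem_diff, mem_setOf_eq, not_le]
    rw [← hdiff, lintegral_inter_add_diff _ _ hAmeas]
  rw [hsplit]
  gcongr ?_ + ?_
  · -- part on A : pointwise bound then monotonicity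
    calc (∫⁻ x in Ω ∩ A, ENNReal.ofReal (u x ^ ps * (min (u x) h) ^ (κ * p)))
        ≤ ∫⁻ x in Ω ∩ A, ENNReal.ofReal L * ENNReal.ofReal ((u x * (min (u x) h) ^ κ) ^ p) := by
          refine setLIntegral_mono (by fun_prop) fun x hx => ?_
          rw [← ENNReal.ofReal_mul hL.le]
          apply ENNReal.ofReal_le_ofReal
          rcases eq_or_lt_of_le (hu0 x) with h0 | h0
          · rw [← h0]
            simp [Real.zero_rpow (ne_of_gt hps0)]
            positivity
          · rw [key x h0]
            have : (0:ℝ) ≤ (u x * (min (u x) h) ^ κ) ^ p := by positivity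
            exact mul_le_mul_of_nonneg_right hx.2 this
      _ ≤ ∫⁻ x in Ω, ENNReal.ofReal L * ENNReal.ofReal ((u x * (min (u x) h) ^ κ) ^ p) :=
          lintegral_mono_set inter_subset_left
      _ = ENNReal.ofReal L * ∫⁻ x in Ω, ENNReal.ofReal ((u x * (min (u x) h) ^ κ) ^ p) := by
          rw [lintegral_const_mul' _ _ ENNReal.ofReal_ne_top]
  · -- part on S : Hölder
    have hconj : ((ps / (ps - p)) : ℝ).HolderConjugate (ps / p) := by
      rw [Real.holderConjugate_iff]; constructor
      · rw [lt_div_iff₀ hpsp]; linarith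
      · rw [inv_div, inv_div]; field_simp; ring
    set F : EuclideanSpace ℝ (Fin N) → ENNReal :=
      fun x => ENNReal.ofReal (u x ^ ps) ^ ((ps - p) / ps) with hF
    set G : EuclideanSpace ℝ (Fin N) → ENNReal :=
      fun x => ENNReal.ofReal ((u x * (min (u x) h) ^ κ) ^ ps) ^ (p / ps) with hG
    have e1 : ps * ((ps - p) / ps) = ps - p := by field_simp
    have e2 : ps * (p / ps) = p := by field_simp
    have hpt : ∀ x, ENNReal.ofReal (u x ^ ps * (min (u x) h) ^ (κ * p)) = F x * G x := by
      intro x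
      simp only [hF, hG]
      rcases eq_or_lt_of_le (hu0 x) with h0 | h0
      · simp [← h0, Real.zero_rpow (ne_of_gt hps0),
          ENNReal.zero_rpow_of_pos (div_pos hpsp hps0)]
      · rw [ENNReal.ofReal_rpow_of_nonneg (by positivity) (by positivity),
          ENNReal.ofReal_rpow_of_nonneg (by positivity) (by positivity),
          ← ENNReal.ofReal_mul (by positivity)]
        congr 1
        rw [← Real.rpow_mul (hu0 x), ← Real.rpow_mul (by positivity), e1, e2, key x h0]
    have hFmeas : AEMeasurable F (MeasureTheory.volume.restrict S) := by fun_prop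
    have hGmeas : AEMeasurable G (MeasureTheory.volume.restrict S) := by fun_prop
    calc (∫⁻ x in S, ENNReal.ofReal (u x ^ ps * (min (u x) h) ^ (κ * p)))
        = ∫⁻ x in S, (F * G) x := lintegral_congr fun x => hpt x
      _ ≤ (∫⁻ x in S, F x ^ (ps / (ps - p))) ^ (1 / (ps / (ps - p))) *
            (∫⁻ x in S, G x ^ (ps / p)) ^ (1 / (ps / p)) :=
          ENNReal.lintegral_mul_le_Lp_mul_Lq _ hconj hFmeas hGmeas
      _ ≤ (∫⁻ x in S, ENNReal.ofReal (u x ^ ps)) ^ ((ps - p) / ps) *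
            (∫⁻ x in Ω, ENNReal.ofReal ((u x * (min (u x) h) ^ κ) ^ ps)) ^ (p / ps) := by
          rw [one_div_div, one_div_div]
          gcongr ?_ * ?_
          · apply le_of_eq
            congr 1
            refine lintegral_congr fun x => ?_
            have e3 : (ps - p) / ps * (ps / (ps - p)) = 1 := by field_simp
            rw [hF, ← ENNReal.rpow_mul, e3, ENNReal.rpow_one]
          · refine ENNReal.rpow_le_rpow ?_ (by positivity)
            calc (∫⁻ x in S, G x ^ (ps / p))
                = ∫⁻ x in S, ENNReal.ofReal ((u x * (min (u x) h) ^ κ) ^ ps) := by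
                  refine lintegral_congr fun x => ?_
                  have e4 : p / ps * (ps / p) = 1 := by field_simp
                  rw [hG, ← ENNReal.rpow_mul, e4, ENNReal.rpow_one]
              _ ≤ _ := lintegral_mono_set fun x hx => hx.1
end
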